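/- Let F : [a,b] → K(ℝ^d) be a bounded-variation multifunction with compact graph and s a metric selection of F (a pointwise limit of chain functions corresponding to partitions with mesh tending to zero). Then for every x* ∈ [a,b] and δ > 0, ω⁻(s, x*, δ) ≤ ω⁻(v_F, x*, 2δ). In particular, if F is left continuous at x* (in the Hausdorff metric) then s is left continuous at x*. -/

import Mathlib

open Set Filter Topology

/-- `(p,q)` is a metric pair of `(A,B)`. -/
def IsMetricPair {E : Type*} [MetricSpace E] (A B : Set E) (p q : E) : Prop :=
  p ∈ A ∧ q ∈ B ∧ (dist q p = Metric.infDist q A ∨ dist p q = Metric.infDist p B)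

/-- `c` is a chain function of `F` on `[a,b]` built from a partition of mesh at most
`h` and a corresponding metric chain. -/
def IsChainFunction {d : ℕ} (a b : ℝ)
    (F : ℝ → TopologicalSpace.NonemptyCompacts (EuclideanSpace ℝ (Fin d)))
    (c : ℝ → EuclideanSpace ℝ (Fin d)) (h : ℝ) : Prop :=
  ∃ (n : ℕ) (x : Fin (n+2) → ℝ) (y : Fin (n+2) → EuclideanSpace ℝ (Fin d)),
    StrictMono x ∧ x 0 = a ∧ x (Fin.last (n+1)) = b ∧
    (∀ i : Fin (n+1), x i.succ - x i.castSucc ≤ h) ∧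
    (∀ i, y i ∈ (F (x i) : Set (EuclideanSpace ℝ (Fin d)))) ∧
    (∀ i : Fin (n+1),
      IsMetricPair (F (x i.castSucc) : Set (EuclideanSpace ℝ (Fin d)))
        (F (x i.succ) : Set (EuclideanSpace ℝ (Fin d))) (y i.castSucc) (y i.succ)) ∧
    (∀ i : Fin (n+1), ∀ t ∈ Set.Ico (x i.castSucc) (x i.succ), c t = y i.castSucc) ∧
    c b = y (Fin.last (n+1))

/-- `s` is a metric selection of `F` on `[a,b]`: a selection which is the pointwise
limit of chain functions of `F` corresponding to partitions with mesh tending to `0`. -/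
def IsMetricSelection {d : ℕ} (a b : ℝ)
    (F : ℝ → TopologicalSpace.NonemptyCompacts (EuclideanSpace ℝ (Fin d)))
    (s : ℝ → EuclideanSpace ℝ (Fin d)) : Prop :=
  (∀ t ∈ Set.Icc a b, s t ∈ (F t : Set (EuclideanSpace ℝ (Fin d)))) ∧
  ∃ (c : ℕ → ℝ → EuclideanSpace ℝ (Fin d)) (h : ℕ → ℝ),
    (∀ k, IsChainFunction a b F (c k) (h k)) ∧
    Tendsto h atTop (𝓝 0) ∧
    (∀ t ∈ Set.Icc a b, Tendsto (fun k => c k t) atTop (𝓝 (s t)))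

/-- Left local modulus of continuity `ω⁻(f,xs,δ)`. -/
noncomputable def omegaMinus {X : Type*} [PseudoEMetricSpace X]
    (f : ℝ → X) (a b xs δ : ℝ) : ENNReal :=
  ⨆ x ∈ Set.Icc (xs - δ) xs ∩ Set.Icc a b, edist (f x) (f xs)

/-- For a BV multifunction `F : [a,b] → K(ℝ^d)` (variation in the Hausdorff metric)
and a metric selection `s` of `F`: `ω⁻(s, xs, δ) ≤ ω⁻(v_F, xs, 2δ)` for every
`xs ∈ [a,b]` and `δ > 0`; in particular, if `F` is left continuous at `xs` (in the
Hausdorff metric), then `s` is left continuous at `xs`. -/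
lemma metricPair_dist_le {E : Type*} [MetricSpace E] {A B : Set E}
    (hA : IsCompact A) (hA' : A.Nonempty) (hB : IsCompact B) (hB' : B.Nonempty)
    {p q : E} (h : IsMetricPair A B p q) : dist p q ≤ Metric.hausdorffDist A B := by
  obtain ⟨hp, hq, hd⟩ := h
  have hne : EMetric.hausdorffEdist A B ≠ ⊤ :=
    Metric.hausdorffEdist_ne_top_of_nonempty_of_bounded hA' hB' hA.isBounded hB.isBounded
  rcases hd with h1 | h1
  · rw [dist_comm, h1]
    calc Metric.infDist q A ≤ Metric.hausdorffDist B A :=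
          Metric.infDist_le_hausdorffDist_of_mem hq (by rwa [EMetric.hausdorffEdist_comm])
      _ = Metric.hausdorffDist A B := Metric.hausdorffDist_comm
  · rw [h1]
    exact Metric.infDist_le_hausdorffDist_of_mem hp hne

lemma dist_le_variationOnFromTo {E : Type*} [PseudoMetricSpace E]
    {F : ℝ → E} {S : Set ℝ} (hF : BoundedVariationOn F S)
    {u v : ℝ} (hu : u ∈ S) (hv : v ∈ S) (huv : u ≤ v) :
    dist (F u) (F v) ≤ variationOnFromTo F S u v := by
  rw [variationOnFromTo.eq_of_le F S huv, dist_edist]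
  refine ENNReal.toReal_mono (ne_top_of_le_ne_top hF (eVariationOn.mono F inter_subset_left)) ?_
  exact eVariationOn.edist_le F ⟨hu, le_refl u, huv⟩ ⟨hv, huv, le_refl v⟩

lemma exists_chain_index {n : ℕ} {x : Fin (n+2) → ℝ} (hx : StrictMono x) {t : ℝ}
    (h1 : x 0 ≤ t) (h2 : t < x (Fin.last (n+1))) :
    ∃ i : Fin (n+1), x i.castSucc ≤ t ∧ t < x i.succ := by
  classical
  let T : Finset (Fin (n+2)) := Finset.univ.filter (fun m => x m ≤ t)
  have hT : T.Nonempty := ⟨0, by simp [T, h1]⟩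
  set m := T.max' hT with hm
  have hmT : m ∈ T := T.max'_mem hT
  have hmle : x m ≤ t := by simpa [T] using hmT
  have hmlast : m ≠ Fin.last (n+1) := by
    intro he; rw [he] at hmle; exact absurd hmle (not_le.2 h2)
  refine ⟨m.castPred hmlast, by simpa using hmle, ?_⟩
  by_contra hc
  push_neg at hc
  have hmem : (m.castPred hmlast).succ ∈ T := by simp [T, hc]
  have hle := T.le_max' _ hmem
  rw [← hm] at hle
  have : m < (m.castPred hmlast).succ := by
    conv_lhs => rw [← Fin.castSucc_castPred m hmlast]
    exact Fin.castSucc_lt_succ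
  exact absurd hle (not_le.2 this)

lemma chain_telescope {E : Type*} [MetricSpace E]
    {a b : ℝ} {F : ℝ → TopologicalSpace.NonemptyCompacts E}
    (hF : BoundedVariationOn F (Set.Icc a b))
    {n : ℕ} {x : Fin (n+2) → ℝ} {y : Fin (n+2) → E}
    (hx : StrictMono x) (hx0 : x 0 = a) (hxl : x (Fin.last (n+1)) = b)
    (hmp : ∀ i : Fin (n+1), IsMetricPair (F (x i.castSucc) : Set E) (F (x i.succ) : Set E)
      (y i.castSucc) (y i.succ)) :
    ∀ j i : Fin (n+2), i ≤ j →
      dist (y i) (y j) ≤ variationOnFromTo F (Set.Icc a b) a (x j)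
        - variationOnFromTo F (Set.Icc a b) a (x i) := by
  have hmem : ∀ i : Fin (n+2), x i ∈ Set.Icc a b := fun i =>
    ⟨hx0 ▸ hx.monotone (Fin.zero_le i), hxl ▸ hx.monotone (Fin.le_last i)⟩
  have hloc := hF.locallyBoundedVariationOn
  have ha : a ∈ Set.Icc a b := hx0 ▸ hmem 0
  intro j
  induction j using Fin.induction with
  | zero =>
    intro i hi
    have h0 : i = 0 := Fin.le_zero_iff.mp hi
    subst h0
    simp
  | succ k ih =>
    intro i hi
    rcases eq_or_lt_of_le hi with he | hlt
    · rw [he]; simp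
    · have hik : i ≤ k.castSucc := Fin.le_castSucc_iff.mpr hlt
      have step : dist (y k.castSucc) (y k.succ) ≤
          variationOnFromTo F (Set.Icc a b) a (x k.succ)
            - variationOnFromTo F (Set.Icc a b) a (x k.castSucc) := by
        have h1 : dist (y k.castSucc) (y k.succ) ≤ dist (F (x k.castSucc)) (F (x k.succ)) := by
          rw [Metric.NonemptyCompacts.dist_eq]
          exact metricPair_dist_le (F _).isCompact (F _).nonempty (F _).isCompact
            (F _).nonempty (hmp k)
        have h2 := dist_le_variationOnFromTo hF (hmem k.castSucc) (hmem k.succ)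
          (hx.monotone (Fin.castSucc_lt_succ : k.castSucc < k.succ).le)
        have h3 := variationOnFromTo.add hloc ha (hmem k.castSucc) (hmem k.succ)
        linarith
      have := ih i hik
      have tri := dist_triangle (y i) (y k.castSucc) (y k.succ)
      linarith

lemma chainFunction_edist_le {d : ℕ} {a b : ℝ}
    {F : ℝ → TopologicalSpace.NonemptyCompacts (EuclideanSpace ℝ (Fin d))}
    (hF : BoundedVariationOn F (Set.Icc a b))
    {c : ℝ → EuclideanSpace ℝ (Fin d)} {h δ xs x : ℝ}
    (hc : IsChainFunction a b F c h) (hhδ : h ≤ δ)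
    (hxs : xs ∈ Set.Icc a b) (hx : x ∈ Set.Icc (xs - δ) xs ∩ Set.Icc a b) :
    edist (c x) (c xs) ≤
      omegaMinus (fun t => variationOnFromTo F (Set.Icc a b) a t) a b xs (2*δ) := by
  obtain ⟨n, xp, y, hxm, hx0, hxl, hmesh, hy, hmp, hcv, hcb⟩ := hc
  set v : ℝ → ℝ := fun t => variationOnFromTo F (Set.Icc a b) a t with hv
  obtain ⟨⟨hx1, hx2⟩, hxa, hxb⟩ := hx
  have hmem : ∀ i : Fin (n+2), xp i ∈ Set.Icc a b := fun i =>
    ⟨hx0 ▸ hxm.monotone (Fin.zero_le i), hxl ▸ hxm.monotone (Fin.le_last i)⟩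
  have ha : a ∈ Set.Icc a b := hx0 ▸ hmem 0
  have hloc := hF.locallyBoundedVariationOn
  rcases eq_or_lt_of_le hxb with hxby | hxby
  · have hxsb : xs = b := le_antisymm hxs.2 (hxby ▸ hx2)
    rw [hxby, hxsb]
    simp
  · obtain ⟨i, hi1, hi2⟩ := exists_chain_index hxm (hx0 ▸ hxa) (hxl ▸ hxby)
    have hcx : c x = y i.castSucc := hcv i x ⟨hi1, hi2⟩
    have key : ∃ jj : Fin (n+2), c xs = y jj ∧ xp jj ≤ xs ∧ i.castSucc ≤ jj := by
      rcases eq_or_lt_of_le hxs.2 with hb | hb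
      · refine ⟨Fin.last (n+1), ?_, ?_, Fin.le_last _⟩
        · rw [hb]; exact hcb
        · rw [hxl, hb]
      · obtain ⟨j, hj1, hj2⟩ := exists_chain_index hxm (hx0 ▸ hxs.1) (hxl ▸ hb)
        refine ⟨j.castSucc, hcv j xs ⟨hj1, hj2⟩, hj1, ?_⟩
        by_contra hcon
        push_neg at hcon
        have : j < i := by
          rwa [Fin.castSucc_lt_castSucc_iff] at hcon
        have h5 : xp j.succ ≤ xp i.castSucc := hxm.monotone (Fin.succ_le_castSucc_iff.mpr this)
        have : xs < xs := lt_of_lt_of_le hj2 (h5.trans (hi1.trans hx2))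
        exact absurd this (lt_irrefl _)
    obtain ⟨jj, hcxs, hjle, hij⟩ := key
    have hdist : dist (c x) (c xs) ≤ v xs - v (xp i.castSucc) := by
      rw [hcx, hcxs]
      have h1 := chain_telescope hF hxm hx0 hxl hmp jj i.castSucc hij
      have h2 : v (xp jj) ≤ v xs :=
        variationOnFromTo.monotoneOn hloc ha (hmem jj) hxs hjle
      simp only [hv]
      linarith [h1, h2]
    set u0 := xp i.castSucc with hu0
    have hu0mem : u0 ∈ Set.Icc (xs - 2*δ) xs ∩ Set.Icc a b := by
      refine ⟨⟨?_, hi1.trans hx2⟩, hmem _⟩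
      have := hmesh i
      have hδ' : xs - δ ≤ x := hx1
      have : xs - 2*δ ≤ xp i.succ - δ - δ + δ := by nlinarith [hi2]
      nlinarith [hmesh i, hi2, hx1, hhδ]
    calc edist (c x) (c xs) = ENNReal.ofReal (dist (c x) (c xs)) := edist_dist _ _
      _ ≤ ENNReal.ofReal (v xs - v u0) := ENNReal.ofReal_le_ofReal hdist
      _ ≤ edist (v u0) (v xs) := by
          rw [edist_dist, Real.dist_eq]
          exact ENNReal.ofReal_le_ofReal ((abs_sub_comm (v xs) (v u0)) ▸ le_abs_self _)
      _ ≤ _ := le_iSup₂ (f := fun t (_ : t ∈ Set.Icc (xs - 2*δ) xs ∩ Set.Icc a b) =>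
            edist (v t) (v xs)) u0 hu0mem

lemma tail_variation_small {E : Type*} [PseudoEMetricSpace E]
    {a b xs : ℝ} (hax : a < xs) (hxs : xs ∈ Set.Icc a b)
    {F : ℝ → E} (hF : BoundedVariationOn F (Set.Icc a b))
    (hFc : ContinuousWithinAt F (Set.Icc a xs) xs) :
    ∀ ε : ENNReal, 0 < ε → ε ≠ ⊤ → ∃ t ∈ Set.Ico a xs,
      eVariationOn F (Set.Icc a b ∩ Set.Icc t xs) ≤ ε := by
  intro ε hε hεtop
  have hε2 : (0 : ENNReal) < ε/2 := ENNReal.half_pos hε.ne'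
  obtain ⟨δ0, hδ0, hcont⟩ := EMetric.tendsto_nhdsWithin_nhds.mp hFc (ε/2) hε2
  set δr := min δ0 1 with hδr
  have hδrpos : 0 < δr := lt_min hδ0 one_pos
  have hδrtop : δr ≠ ⊤ := ne_top_of_le_ne_top ENNReal.one_ne_top (min_le_right _ _)
  have hδrR : 0 < δr.toReal := ENNReal.toReal_pos hδrpos.ne' hδrtop
  set t0 := max a (xs - δr.toReal/2) with ht0
  have ht0a : a ≤ t0 := le_max_left _ _
  have ht0xs : t0 < xs := max_lt hax (by linarith)
  have ht0b : t0 ∈ Set.Icc a b := ⟨ht0a, ht0xs.le.trans hxs.2⟩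
  have hclose : ∀ u : ℝ, t0 ≤ u → u ≤ xs → edist (F u) (F xs) < ε/2 := by
    intro u h1 h2
    have hu : u ∈ Set.Icc a xs := ⟨ht0a.trans h1, h2⟩
    apply hcont hu
    rw [edist_dist, Real.dist_eq, abs_of_nonpos (by linarith)]
    have h3 : -(u - xs) ≤ δr.toReal/2 := by
      have : xs - δr.toReal/2 ≤ t0 := le_max_right _ _
      linarith
    calc ENNReal.ofReal (-(u - xs)) ≤ ENNReal.ofReal (δr.toReal/2) :=
          ENNReal.ofReal_le_ofReal h3
      _ < ENNReal.ofReal δr.toReal := ENNReal.ofReal_lt_ofReal_iff hδrR |>.mpr (by linarith)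
      _ = δr := ENNReal.ofReal_toReal hδrtop
      _ ≤ δ0 := min_le_left _ _
  set W : ℝ → ENNReal := fun t => eVariationOn F (Set.Icc a b ∩ Set.Icc t xs) with hW
  have hWfin : ∀ t, W t ≠ ⊤ := fun t =>
    ne_top_of_le_ne_top hF (eVariationOn.mono F inter_subset_left)
  by_cases hWt0 : W t0 ≤ ε
  · exact ⟨t0, ⟨ht0a, ht0xs⟩, hWt0⟩
  push_neg at hWt0
  have hWpos : W t0 ≠ 0 := (hε.trans hWt0).ne'
  have hsub : W t0 - ε/2 < W t0 :=
    ENNReal.sub_lt_self (hWfin t0) hWpos hε2.ne'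
  have hsub' : W t0 - ε/2 < eVariationOn F (Set.Icc a b ∩ Set.Icc t0 xs) := hsub
  rw [eVariationOn, lt_iSup_iff] at hsub'
  obtain ⟨⟨N, u, hu, hus⟩, hp⟩ := hsub'
  simp only at hp
  have husb : ∀ i, u i ∈ Set.Icc a b := fun i => (hus i).1
  have hust0 : ∀ i, t0 ≤ u i := fun i => (hus i).2.1
  have husxs : ∀ i, u i ≤ xs := fun i => (hus i).2.2
  classical
  set T := (Finset.range (N+1)).filter (fun k => u k < xs) with hT
  by_cases hTne : T.Nonempty
  · set m := T.max' hTne with hm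
    have hmT : m ∈ T := T.max'_mem hTne
    have hmN : m ≤ N :=
      Nat.lt_succ_iff.mp (Finset.mem_range.mp (Finset.mem_filter.mp hmT).1)
    have hmlt : u m < xs := (Finset.mem_filter.mp hmT).2
    have hmax : ∀ k, k ≤ N → u k < xs → k ≤ m := fun k hk hlt =>
      T.le_max' k (Finset.mem_filter.mpr ⟨Finset.mem_range.mpr (Nat.lt_succ_of_le hk), hlt⟩)
    have huxs : ∀ k, m < k → k ≤ N → u k = xs := fun k h1 h2 =>
      le_antisymm (husxs k) (le_of_not_gt fun hc => (Nat.not_le.mpr h1) (hmax k h2 hc))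
    set w : ℕ → ℝ := fun i => u (min i m) with hwdef
    have hw : Monotone w := fun i j hij => hu (min_le_min hij (le_refl m))
    have hws : ∀ i, w i ∈ Set.Icc a b ∩ Set.Icc t0 (u m) := fun i =>
      ⟨husb _, hust0 _, hu (min_le_right i m)⟩
    have sum_w := eVariationOn.sum_le (f := F) (n := N) hw hws
    have claim : ∀ i ∈ Finset.range N, edist (F (u (i+1))) (F (u i)) ≤
        edist (F (w (i+1))) (F (w i)) + (if i = m then edist (F xs) (F (u m)) else 0) := by
      intro i hi
      have hiN : i < N := Finset.mem_range.mp hi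
      rcases lt_trichotomy i m with hc | hc | hc
      · have e1 : w i = u i := by simp [hwdef, min_eq_left hc.le]
        have e2 : w (i+1) = u (i+1) := by simp [hwdef, min_eq_left (Nat.succ_le_of_lt hc)]
        rw [e1, e2, if_neg hc.ne]
        simp
      · subst hc
        have e1 : w m = u m := by simp [hwdef]
        have e2 : w (m+1) = u m := by simp [hwdef]
        rw [e1, e2, if_pos rfl, edist_self, zero_add]
        have hux : u (m+1) = xs := huxs (m+1) (Nat.lt_succ_self m) hiN
        rw [hux]
      · have e1 : u i = xs := huxs i hc (le_of_lt hiN)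
        have e2 : u (i+1) = xs := huxs (i+1) (Nat.lt_succ_of_lt hc) hiN
        rw [e1, e2, edist_self]
        exact zero_le
    have hFclose : edist (F xs) (F (u m)) < ε/2 := by
      rw [edist_comm]
      exact hclose (u m) (hust0 m) (husxs m)
    have hsum : ∑ i ∈ Finset.range N, edist (F (u (i+1))) (F (u i)) ≤
        eVariationOn F (Set.Icc a b ∩ Set.Icc t0 (u m)) + edist (F xs) (F (u m)) := by
      calc ∑ i ∈ Finset.range N, edist (F (u (i+1))) (F (u i))
          ≤ ∑ i ∈ Finset.range N, (edist (F (w (i+1))) (F (w i)) +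
              (if i = m then edist (F xs) (F (u m)) else 0)) := Finset.sum_le_sum claim
        _ = (∑ i ∈ Finset.range N, edist (F (w (i+1))) (F (w i))) +
              ∑ i ∈ Finset.range N, (if i = m then edist (F xs) (F (u m)) else 0) :=
            Finset.sum_add_distrib
        _ ≤ eVariationOn F (Set.Icc a b ∩ Set.Icc t0 (u m)) + edist (F xs) (F (u m)) := by
            refine add_le_add sum_w ?_
            rw [Finset.sum_ite_eq' (Finset.range N) m]
            split
            · exact le_rfl
            · exact zero_le
    have hW'fin : eVariationOn F (Set.Icc a b ∩ Set.Icc t0 (u m)) ≠ ⊤ :=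
      ne_top_of_le_ne_top hF (eVariationOn.mono F inter_subset_left)
    have hεhalf : ε/2 ≤ W t0 := (ENNReal.half_le_self).trans hWt0.le
    have hε2top : (ε/2) ≠ ⊤ := ne_top_of_le_ne_top hεtop ENNReal.half_le_self
    have hWlt : W t0 < eVariationOn F (Set.Icc a b ∩ Set.Icc t0 (u m)) + ε := by
      have h1 : W t0 = (W t0 - ε/2) + ε/2 := (tsub_add_cancel_of_le hεhalf).symm
      have h2 : (W t0 - ε/2) + ε/2 <
          (∑ i ∈ Finset.range N, edist (F (u (i+1))) (F (u i))) + ε/2 :=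
        ENNReal.add_lt_add_right hε2top hp
      have h3 : (∑ i ∈ Finset.range N, edist (F (u (i+1))) (F (u i))) + ε/2 ≤
          (eVariationOn F (Set.Icc a b ∩ Set.Icc t0 (u m)) + edist (F xs) (F (u m))) + ε/2 :=
        add_le_add_left hsum _
      have h4 : (eVariationOn F (Set.Icc a b ∩ Set.Icc t0 (u m)) + edist (F xs) (F (u m))) + ε/2
          ≤ eVariationOn F (Set.Icc a b ∩ Set.Icc t0 (u m)) + ε := by
        rw [add_assoc]
        refine add_le_add_right ?_ _
        calc edist (F xs) (F (u m)) + ε/2 ≤ ε/2 + ε/2 := add_le_add_left hFclose.le _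
          _ = ε := ENNReal.add_halves ε
      calc W t0 = (W t0 - ε/2) + ε/2 := h1
        _ < _ := h2
        _ ≤ _ := h3
        _ ≤ _ := h4
    have hadd := eVariationOn.Icc_add_Icc F (hust0 m) (husxs m) (husb m)
    rw [hW] at hWlt
    simp only at hWlt
    rw [← hadd] at hWlt
    have hfinal : eVariationOn F (Set.Icc a b ∩ Set.Icc (u m) xs) < ε :=
      (ENNReal.add_lt_add_iff_left hW'fin).mp hWlt
    exact ⟨u m, ⟨ht0a.trans (hust0 m), hmlt⟩, hfinal.le⟩
  · exfalso
    have hz : ∀ i ∈ Finset.range N, edist (F (u (i+1))) (F (u i)) = 0 := by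
      intro i hi
      have hiN : i < N := Finset.mem_range.mp hi
      have hxs1 : u i = xs := by
        refine le_antisymm (husxs i) (le_of_not_gt fun hc => hTne ⟨i, ?_⟩)
        exact Finset.mem_filter.mpr ⟨Finset.mem_range.mpr (Nat.lt_succ_of_lt hiN), hc⟩
      have hxs2 : u (i+1) = xs := by
        refine le_antisymm (husxs _) (le_of_not_gt fun hc => hTne ⟨i+1, ?_⟩)
        exact Finset.mem_filter.mpr ⟨Finset.mem_range.mpr (Nat.succ_lt_succ hiN), hc⟩
      rw [hxs1, hxs2, edist_self]
    rw [Finset.sum_eq_zero hz] at hp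
    exact ENNReal.not_lt_zero hp

theorem omegaMinus_metricSelection_le {d : ℕ} (a b : ℝ) (hab : a < b)
    (F : ℝ → TopologicalSpace.NonemptyCompacts (EuclideanSpace ℝ (Fin d)))
    (hF : BoundedVariationOn F (Set.Icc a b))
    (s : ℝ → EuclideanSpace ℝ (Fin d)) (hs : IsMetricSelection a b F s)
    (xs : ℝ) (hxs : xs ∈ Set.Icc a b) :
    (∀ δ : ℝ, 0 < δ →
      omegaMinus s a b xs δ ≤
        omegaMinus (fun t => variationOnFromTo F (Set.Icc a b) a t) a b xs (2*δ)) ∧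
    (ContinuousWithinAt F (Set.Icc a xs) xs → ContinuousWithinAt s (Set.Icc a xs) xs) := by
  have hab' : a ≤ b := hab.le
  have hloc := hF.locallyBoundedVariationOn
  have haS : a ∈ Set.Icc a b := left_mem_Icc.mpr hab'
  have part1 : ∀ δ : ℝ, 0 < δ →
      omegaMinus s a b xs δ ≤
        omegaMinus (fun t => variationOnFromTo F (Set.Icc a b) a t) a b xs (2*δ) := by
    intro δ hδ
    obtain ⟨hsel, c, h, hck, hh0, hlim⟩ := hs
    unfold omegaMinus
    refine iSup₂_le fun x hx => ?_
    have h1 : Tendsto (fun k => edist (c k x) (c k xs)) atTop (𝓝 (edist (s x) (s xs))) :=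
      (hlim x hx.2).edist (hlim xs hxs)
    refine le_of_tendsto h1 ?_
    filter_upwards [hh0.eventually_lt_const hδ] with k hk
    exact chainFunction_edist_le hF (hck k) hk.le hxs hx
  refine ⟨part1, fun hFc => ?_⟩
  rcases eq_or_lt_of_le hxs.1 with hax | hax
  · rw [← hax, Set.Icc_self]
    exact continuousWithinAt_singleton
  · have key : Tendsto s (𝓝[Set.Icc a xs] xs) (𝓝 (s xs)) := by
      rw [EMetric.tendsto_nhdsWithin_nhds]
      intro ε hε
      set ε' := min ε 1 with hε'def
      have hε'pos : 0 < ε' := lt_min hε one_pos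
      have hε'top : ε' ≠ ⊤ := ne_top_of_le_ne_top ENNReal.one_ne_top (min_le_right _ _)
      have hε'2 : (0 : ENNReal) < ε'/2 := ENNReal.half_pos hε'pos.ne'
      have hε'2top : ε'/2 ≠ ⊤ := ne_top_of_le_ne_top hε'top ENNReal.half_le_self
      obtain ⟨t1, ⟨ht1a, ht1xs⟩, ht1⟩ :=
        tail_variation_small hax hxs hF hFc (ε'/2) hε'2 hε'2top
      set δ := (xs - t1)/2 with hδdef
      have hδ : 0 < δ := by rw [hδdef]; linarith
      refine ⟨ENNReal.ofReal δ, ENNReal.ofReal_pos.mpr hδ, ?_⟩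
      intro x hxmem hxd
      have hxd' : |x - xs| < δ := by
        rw [edist_dist, Real.dist_eq] at hxd
        exact (ENNReal.ofReal_lt_ofReal_iff hδ).mp hxd
      have habs := abs_lt.mp hxd'
      have hxset : x ∈ Set.Icc (xs - δ) xs ∩ Set.Icc a b :=
        ⟨⟨by linarith [habs.1], hxmem.2⟩, hxmem.1, hxmem.2.trans hxs.2⟩
      have hωv : omegaMinus (fun t => variationOnFromTo F (Set.Icc a b) a t) a b xs (2*δ)
          ≤ ε'/2 := by
        unfold omegaMinus
        refine iSup₂_le fun t ht => ?_
        obtain ⟨⟨htl, htr⟩, hta, htb⟩ := ht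
        have htt1 : t1 ≤ t := by rw [hδdef] at htl; linarith
        have htS : t ∈ Set.Icc a b := ⟨hta, htb⟩
        have hmono : variationOnFromTo F (Set.Icc a b) a t ≤
            variationOnFromTo F (Set.Icc a b) a xs :=
          variationOnFromTo.monotoneOn hloc haS htS hxs htr
        have hadd := variationOnFromTo.add hloc haS htS hxs
        have hedist : edist (variationOnFromTo F (Set.Icc a b) a t)
            (variationOnFromTo F (Set.Icc a b) a xs) ≤
            eVariationOn F (Set.Icc a b ∩ Set.Icc t xs) := by
          rw [edist_dist, Real.dist_eq, abs_of_nonpos (by linarith)]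
          have heq : -(variationOnFromTo F (Set.Icc a b) a t
              - variationOnFromTo F (Set.Icc a b) a xs)
              = variationOnFromTo F (Set.Icc a b) t xs := by linarith
          rw [heq, variationOnFromTo.eq_of_le F _ htr]
          exact ENNReal.ofReal_toReal_le
        refine hedist.trans ((eVariationOn.mono F ?_).trans ht1)
        exact inter_subset_inter_right _ (Set.Icc_subset_Icc htt1 le_rfl)
      calc edist (s x) (s xs)
          ≤ omegaMinus s a b xs δ := by
            unfold omegaMinus
            exact le_iSup₂ (f := fun t (_ : t ∈ Set.Icc (xs - δ) xs ∩ Set.Icc a b) =>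
              edist (s t) (s xs)) x hxset
        _ ≤ omegaMinus (fun t => variationOnFromTo F (Set.Icc a b) a t) a b xs (2*δ) :=
            part1 δ hδ
        _ ≤ ε'/2 := hωv
        _ < ε' := ENNReal.half_lt_self hε'pos.ne' hε'top
        _ ≤ ε := min_le_left _ _
    exact key
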